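/- For all n ≥ 0, t(n) ≥ 0. -/
import Mathlib

def rs : ℕ → ℤ
  | 0 => 1
  | (n+1) =>
    if (n+1) % 2 = 0 then rs ((n+1)/2)
    else (-1)^((n+1)/2) * rs ((n+1)/2)
decreasing_by all_goals exact Nat.div_lt_self (Nat.succ_pos n) (by norm_num)

def s (n : ℕ) : ℤ := ∑ i ∈ Finset.range (n+1), rs i

def t (n : ℕ) : ℤ := ∑ i ∈ Finset.range (n+1), (-1)^i * rs i

lemma rs_two_mul (n : ℕ) : rs (2*n) = rs n := by
  cases n with
  | zero => rfl
  | succ m =>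
    rw [show 2*(m+1) = (2*m+1)+1 by ring, rs]
    have h1 : (2*m+1+1) % 2 = 0 := by omega
    have h2 : (2*m+1+1) / 2 = m+1 := by omega
    rw [h1, h2]; simp

lemma rs_odd (n : ℕ) : rs (2*n+1) = (-1)^n * rs n := by
  rw [show 2*n+1 = (2*n)+1 by ring, rs]
  have h1 : ¬ (2*n+1) % 2 = 0 := by omega
  have h2 : (2*n+1) / 2 = n := by omega
  rw [if_neg h1, h2]

lemma s_succ (n : ℕ) : s (n+1) = s n + rs (n+1) := by
  simp [s, Finset.sum_range_succ]

lemma t_succ (n : ℕ) : t (n+1) = t n + (-1)^(n+1) * rs (n+1) := by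
  simp [t, Finset.sum_range_succ]

lemma st_odd (n : ℕ) : s (2*n+1) = s n + t n ∧ t (2*n+1) = s n - t n := by
  induction n with
  | zero =>
    have h0 : rs 0 = 1 := by rw [rs.eq_def]
    have h1 : rs 1 = 1 := by rw [show (1:ℕ) = 0+1 from rfl, rs]; norm_num [h0]
    constructor <;> simp [s, t, Finset.sum_range_succ, h1, h0]
  | succ m ih =>
    have e1 : 2*(m+1)+1 = (2*m+1)+1+1 := by ring
    have e2 : (2*m+1)+1 = 2*(m+1) := by ring
    have e3 : (2*m+1)+1+1 = 2*(m+1)+1 := by ring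
    constructor
    · rw [e1, s_succ, s_succ, ih.1, s_succ, t_succ, e2, rs_two_mul, rs_odd]
      ring
    · rw [e1, t_succ, t_succ, ih.2, s_succ, t_succ, e2, rs_two_mul, rs_odd]
      rw [show (-1:ℤ)^(2*(m+1)) = 1 by simp [pow_mul],
          show (-1:ℤ)^(2*(m+1)+1) = -1 by simp [pow_succ, pow_mul]]
      ring

lemma st_even (n : ℕ) :
    s (2*n) = s n + t n - (-1)^n * rs n ∧ t (2*n) = s n - t n + (-1)^n * rs n := by
  have h1 := s_succ (2*n)
  have h2 := t_succ (2*n)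
  rw [rs_odd] at h1 h2
  have h3 := st_odd n
  rw [show (-1:ℤ)^(2*n+1) = -1 by simp [pow_succ, pow_mul]] at h2
  constructor
  · rw [h3.1] at h1; linarith
  · rw [h3.2] at h2; linarith

lemma key : ∀ n : ℕ, (0 ≤ t n ∧ t n ≤ s n) ∧ (rs n = 1 ∨ rs n = -1) ∧ (s n - t n) % 2 = 0 ∧
    (t n = 0 → (-1)^n * rs n = -1) ∧ (s n = t n → (-1)^n * rs n = 1) ∧
    (t n = 1 → (-1)^n * rs n = 1 → n % 2 = 0) := by
  intro n
  induction n using Nat.strong_induction_on with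
  | _ n ih =>
    obtain ⟨m, rfl | rfl⟩ := Nat.even_or_odd' n
    · rcases Nat.eq_zero_or_pos m with rfl | hm
      · have h0 : rs 0 = 1 := by rw [rs.eq_def]
        norm_num [s, t, h0]
      · obtain ⟨⟨h0, h1⟩, ha, hd, h5, h6, h7⟩ := ih m (by omega)
        have hs := (st_even m).1
        have ht := (st_even m).2
        have hr := rs_two_mul m
        have hp2 : ((-1:ℤ))^(2*m) = 1 := by simp [pow_mul]
        rcases Nat.even_or_odd m with he | he
        · have hp : ((-1:ℤ))^m = 1 := he.neg_one_pow
          have hm2 : m % 2 = 0 := Nat.even_iff.mp he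
          rw [hp, one_mul] at hs ht h5 h6 h7
          refine ⟨⟨?_, ?_⟩, ?_, ?_, ?_, ?_, ?_⟩ <;>
            simp only [hs, ht, hr, hp2, one_mul] <;> omega
        · have hp : ((-1:ℤ))^m = -1 := he.neg_one_pow
          have hm2 : m % 2 = 1 := Nat.odd_iff.mp he
          rw [hp] at hs ht h5 h6 h7
          refine ⟨⟨?_, ?_⟩, ?_, ?_, ?_, ?_, ?_⟩ <;>
            simp only [hs, ht, hr, hp2, one_mul, neg_one_mul] <;> omega
    · obtain ⟨⟨h0, h1⟩, ha, hd, h5, h6, h7⟩ := ih m (by omega)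
      have hs := (st_odd m).1
      have ht := (st_odd m).2
      have hr := rs_odd m
      have hp2 : ((-1:ℤ))^(2*m+1) = -1 := by simp [pow_succ, pow_mul]
      rcases Nat.even_or_odd m with he | he
      · have hp : ((-1:ℤ))^m = 1 := he.neg_one_pow
        have hm2 : m % 2 = 0 := Nat.even_iff.mp he
        rw [hp, one_mul] at hr h5 h6 h7
        refine ⟨⟨?_, ?_⟩, ?_, ?_, ?_, ?_, ?_⟩ <;>
          simp only [hs, ht, hr, hp2, one_mul, neg_one_mul] <;> omega
      · have hp : ((-1:ℤ))^m = -1 := he.neg_one_pow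
        have hm2 : m % 2 = 1 := Nat.odd_iff.mp he
        rw [hp, neg_one_mul] at hr h5 h6 h7
        refine ⟨⟨?_, ?_⟩, ?_, ?_, ?_, ?_, ?_⟩ <;>
          simp only [hs, ht, hr, hp2, one_mul, neg_one_mul] <;> omega

theorem stmt5 : ∀ n : ℕ, 0 ≤ t n := fun n => (key n).1.1
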